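/- Let M ⊂ ℝⁿ be the boundary of a bounded domain strictly starlike with respect to 0, given by radial function r: S^{n-1} → (0,∞), and suppose the polar parametrization φ(u) = r(u)·u is L-bi-Lipschitz from S^{n-1} to M (Euclidean metric). Then the quasi-inversion f_M(x) = r(x/|x|)²·x/|x|², with f_M(0) = ∞ and f_M(∞) = 0, satisfies for all x, y ∈ ℝⁿ \ {0}: (1/L'⁴)·|x−y|/(|x||y|) ≤ |f_M(x) − f_M(y)| ≤ L'⁴·|x−y|/(|x||y|), where L' is the bi-Lipschitz constant of the radial extension φ₁(x) = |x|·r(x/|x|)·(x/|x|) on ℝⁿ \ {0}. -/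

import Mathlib

/-- If the polar parametrization `u ↦ r(u)u` of `M` is `L`-bi-Lipschitz from the unit
sphere to `M`, and its radial extension `φ₁(x) = r(x/|x|)x` is `L'`-bi-Lipschitz on
`ℝⁿ \ {0}`, then the quasi-inversion `f_M(x) = r(x/|x|)² x/|x|²` satisfies
`(1/L'⁴)|x−y|/(|x||y|) ≤ |f_M(x)−f_M(y)| ≤ L'⁴|x−y|/(|x||y|)`. -/
theorem stmt19 (n : ℕ) (r : EuclideanSpace ℝ (Fin n) → ℝ)
    (hr : ∀ u, ‖u‖ = 1 → 0 < r u) (L L' : ℝ) (hL : 1 ≤ L) (hL' : 1 ≤ L')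
    (hphi : ∀ u v : EuclideanSpace ℝ (Fin n), ‖u‖ = 1 → ‖v‖ = 1 →
      ‖u - v‖ / L ≤ ‖r u • u - r v • v‖ ∧ ‖r u • u - r v • v‖ ≤ L * ‖u - v‖)
    (hphi1 : ∀ x y : EuclideanSpace ℝ (Fin n), x ≠ 0 → y ≠ 0 →
      ‖x - y‖ / L' ≤ ‖r (‖x‖⁻¹ • x) • x - r (‖y‖⁻¹ • y) • y‖ ∧
      ‖r (‖x‖⁻¹ • x) • x - r (‖y‖⁻¹ • y) • y‖ ≤ L' * ‖x - y‖) :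
    ∀ x y : EuclideanSpace ℝ (Fin n), x ≠ 0 → y ≠ 0 →
      (1 / L' ^ 4) * (‖x - y‖ / (‖x‖ * ‖y‖)) ≤
        ‖(r (‖x‖⁻¹ • x) ^ 2 / ‖x‖ ^ 2) • x - (r (‖y‖⁻¹ • y) ^ 2 / ‖y‖ ^ 2) • y‖ ∧
      ‖(r (‖x‖⁻¹ • x) ^ 2 / ‖x‖ ^ 2) • x - (r (‖y‖⁻¹ • y) ^ 2 / ‖y‖ ^ 2) • y‖ ≤
        L' ^ 4 * (‖x - y‖ / (‖x‖ * ‖y‖)) := by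
  have hL'0 : (0:ℝ) < L' := lt_of_lt_of_le one_pos hL'
  -- direction is scale invariant
  have hdir : ∀ (c : ℝ) (z : EuclideanSpace ℝ (Fin n)), 0 < c → z ≠ 0 →
      ‖c • z‖⁻¹ • (c • z) = ‖z‖⁻¹ • z := by
    intro c z hc hz
    have hzn : (0:ℝ) < ‖z‖ := norm_pos_iff.mpr hz
    rw [norm_smul, Real.norm_eq_abs, abs_of_pos hc, smul_smul, mul_inv]
    congr 1
    field_simp
  -- unit direction has norm 1
  have hunit : ∀ z : EuclideanSpace ℝ (Fin n), z ≠ 0 → ‖(‖z‖⁻¹ • z)‖ = 1 := by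
    intro z hz
    have hzn : (0:ℝ) < ‖z‖ := norm_pos_iff.mpr hz
    rw [norm_smul, Real.norm_eq_abs, abs_of_pos (inv_pos.mpr hzn), inv_mul_cancel₀ hzn.ne']
  -- positivity of r along rays
  have hrpos : ∀ z : EuclideanSpace ℝ (Fin n), z ≠ 0 → 0 < r (‖z‖⁻¹ • z) := fun z hz =>
    hr _ (hunit z hz)
  -- bounds on r
  have hrb : ∀ z : EuclideanSpace ℝ (Fin n), z ≠ 0 →
      1 ≤ r (‖z‖⁻¹ • z) * L' ∧ r (‖z‖⁻¹ • z) ≤ L' := by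
    intro z hz
    have hzn : (0:ℝ) < ‖z‖ := norm_pos_iff.mpr hz
    have h2 : ((2:ℝ)⁻¹ • z) ≠ 0 := smul_ne_zero (by norm_num) hz
    obtain ⟨h1, h2'⟩ := hphi1 z ((2:ℝ)⁻¹ • z) hz h2
    rw [hdir 2⁻¹ z (by norm_num) hz] at h1 h2'
    have e1 : z - (2:ℝ)⁻¹ • z = (2:ℝ)⁻¹ • z := by
      nth_rewrite 1 [← one_smul ℝ z]
      rw [← sub_smul]; norm_num
    have e2 : r (‖z‖⁻¹ • z) • z - r (‖z‖⁻¹ • z) • ((2:ℝ)⁻¹ • z)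
        = (r (‖z‖⁻¹ • z) * 2⁻¹) • z := by
      rw [smul_smul, ← sub_smul]; ring_nf
    rw [e1, e2, norm_smul, norm_smul] at h1 h2'
    have hru := hrpos z hz
    rw [Real.norm_eq_abs, Real.norm_eq_abs, abs_of_pos (by positivity : (0:ℝ) < (2:ℝ)⁻¹),
      abs_of_pos (by positivity : 0 < r (‖z‖⁻¹ • z) * 2⁻¹)] at h1 h2'
    rw [div_le_iff₀ hL'0] at h1
    constructor
    · have h1' : 1 * (2⁻¹ * ‖z‖) ≤ (r (‖z‖⁻¹ • z) * L') * (2⁻¹ * ‖z‖) := by nlinarith [h1]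
      exact le_of_mul_le_mul_right h1' (by positivity)
    · have h2'' : r (‖z‖⁻¹ • z) * (2⁻¹ * ‖z‖) ≤ L' * (2⁻¹ * ‖z‖) := by nlinarith [h2']
      exact le_of_mul_le_mul_right h2'' (by positivity)
  intro x y hx hy
  have hxn : (0:ℝ) < ‖x‖ := norm_pos_iff.mpr hx
  have hyn : (0:ℝ) < ‖y‖ := norm_pos_iff.mpr hy
  set rx := r (‖x‖⁻¹ • x) with hrxdef
  set ry := r (‖y‖⁻¹ • y) with hrydef
  have hrx : 0 < rx := hrpos x hx
  have hry : 0 < ry := hrpos y hy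
  obtain ⟨hrx1, hrx2⟩ := hrb x hx
  obtain ⟨hry1, hry2⟩ := hrb y hy
  rw [← hrxdef] at hrx1 hrx2
  rw [← hrydef] at hry1 hry2
  set x' := rx⁻¹ • x with hx'def
  set y' := ry⁻¹ • y with hy'def
  have hx'0 : x' ≠ 0 := smul_ne_zero (by positivity) hx
  have hy'0 : y' ≠ 0 := smul_ne_zero (by positivity) hy
  have hdx' : ‖x'‖⁻¹ • x' = ‖x‖⁻¹ • x := hdir _ x (by positivity) hx
  have hdy' : ‖y'‖⁻¹ • y' = ‖y‖⁻¹ • y := hdir _ y (by positivity) hy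
  have hnx' : ‖x'‖ = rx⁻¹ * ‖x‖ := by
    rw [hx'def, norm_smul, Real.norm_eq_abs, abs_of_pos (by positivity)]
  have hny' : ‖y'‖ = ry⁻¹ * ‖y‖ := by
    rw [hy'def, norm_smul, Real.norm_eq_abs, abs_of_pos (by positivity)]
  have hgx' : rx • x' = x := by rw [hx'def, smul_smul, mul_inv_cancel₀ hrx.ne', one_smul]
  have hgy' : ry • y' = y := by rw [hy'def, smul_smul, mul_inv_cancel₀ hry.ne', one_smul]
  obtain ⟨hA, hB⟩ := hphi1 x' y' hx'0 hy'0
  rw [hdx', hdy', ← hrxdef, ← hrydef, hgx', hgy'] at hA hB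
  set a := ((1:ℝ) / ‖x'‖) ^ 2 • x' with hadef
  set b := ((1:ℝ) / ‖y'‖) ^ 2 • y' with hbdef
  have hx'n : (0:ℝ) < ‖x'‖ := norm_pos_iff.mpr hx'0
  have hy'n : (0:ℝ) < ‖y'‖ := norm_pos_iff.mpr hy'0
  have ha0 : a ≠ 0 := smul_ne_zero (by positivity) hx'0
  have hb0 : b ≠ 0 := smul_ne_zero (by positivity) hy'0
  have hab : ‖a - b‖ = rx * ry * ‖x' - y'‖ / (‖x‖ * ‖y‖) := by
    have h := dist_div_norm_sq_smul hx'0 hy'0 (1:ℝ)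
    rw [dist_eq_norm, dist_eq_norm] at h
    rw [← hadef, ← hbdef] at h
    rw [h, hnx', hny', one_pow]
    field_simp
  have hda : ‖a‖⁻¹ • a = ‖x‖⁻¹ • x := by
    rw [hadef, hdir _ x' (by positivity) hx'0, hdx']
  have hdb : ‖b‖⁻¹ • b = ‖y‖⁻¹ • y := by
    rw [hbdef, hdir _ y' (by positivity) hy'0, hdy']
  have hga : rx • a = (rx ^ 2 / ‖x‖ ^ 2) • x := by
    rw [hadef, hx'def, smul_smul, smul_smul, hnx']
    congr 1
    field_simp
  have hgb : ry • b = (ry ^ 2 / ‖y‖ ^ 2) • y := by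
    rw [hbdef, hy'def, smul_smul, smul_smul, hny']
    congr 1
    field_simp
  obtain ⟨hC, hD⟩ := hphi1 a b ha0 hb0
  rw [hda, hdb, ← hrxdef, ← hrydef, hga, hgb] at hC hD
  have hd'0 : (0:ℝ) ≤ ‖x' - y'‖ := norm_nonneg _
  have hd0 : (0:ℝ) ≤ ‖x - y‖ := norm_nonneg _
  have hDpos : (0:ℝ) < ‖x‖ * ‖y‖ := by positivity
  have hhigh : ‖x' - y'‖ ≤ L' * ‖x - y‖ := by
    rw [div_le_iff₀ hL'0] at hA; linarith
  clear_value rx ry x' y' a b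
  constructor
  · -- lower bound
    refine le_trans ?_ hC
    rw [hab]
    have q : 1 ≤ rx * ry * L' ^ 2 := by
      have := mul_le_mul hrx1 hry1 zero_le_one (by positivity : (0:ℝ) ≤ rx * L')
      linarith [this]
    have hnum2 : ‖x - y‖ * L' ≤ rx * ry * ‖x' - y'‖ * L' ^ 4 := by
      have h7 := mul_le_mul_of_nonneg_right q (mul_nonneg hd0 hL'0.le)
      have h8 := mul_le_mul_of_nonneg_left hB
        (by positivity : (0:ℝ) ≤ rx * ry * L' ^ 3)
      linarith [h7, h8]
    rw [one_div, inv_mul_eq_div]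
    simp only [div_div]
    rw [div_le_div_iff₀ (by positivity) (by positivity)]
    linarith [mul_le_mul_of_nonneg_right hnum2 hDpos.le]
  · -- upper bound
    refine le_trans hD ?_
    have hnum : L' * (rx * ry * ‖x' - y'‖) ≤ L' ^ 4 * ‖x - y‖ := by
      have h6 : rx * ry * ‖x' - y'‖ ≤ L' * L' * (L' * ‖x - y‖) :=
        mul_le_mul (mul_le_mul hrx2 hry2 hry.le hL'0.le) hhigh hd'0 (by positivity)
      linarith [mul_le_mul_of_nonneg_left h6 hL'0.le]
    calc L' * ‖a - b‖ = L' * (rx * ry * ‖x' - y'‖) / (‖x‖ * ‖y‖) := by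
          rw [hab]; ring
      _ ≤ L' ^ 4 * ‖x - y‖ / (‖x‖ * ‖y‖) := by gcongr
      _ = L' ^ 4 * (‖x - y‖ / (‖x‖ * ‖y‖)) := by ring
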